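/- Let n ≥ 3 be odd and let k be the number of distinct prime divisors of n. Then there exists a family P of permutations of ZMod n with |P| ≥ n·φ(n)/2^k such that for any two distinct σ, τ ∈ P, the pointwise sum i ↦ σ i + τ i is again a permutation of ZMod n. -/

import Mathlib

open Finset

/-- Counting: numbers below `d*p` with residue satisfying `S`. -/
lemma count_mod_aux (d p : ℕ) (hp : 0 < p) (S : ℕ → Prop) [DecidablePred S] :
    ((Finset.range (d * p)).filter (fun x => S (x % p))).card
      = d * ((Finset.range p).filter S).card := by
  have key : ((Finset.range (d * p)).filter (fun x => S (x % p))).card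
      = ((Finset.range d) ×ˢ ((Finset.range p).filter S)).card := by
    apply Finset.card_bij' (fun x _ => ((x / p : ℕ), (x % p : ℕ)))
        (fun ab _ => ab.1 * p + ab.2)
    · intro x hx
      simp only [mem_filter, mem_range] at hx
      simp only [mem_product, mem_range, mem_filter]
      have hxd : x < p * d := by rw [mul_comm]; exact hx.1
      exact ⟨Nat.div_lt_of_lt_mul hxd, Nat.mod_lt _ hp, hx.2⟩
    · intro ab hab
      simp only [mem_product, mem_range, mem_filter] at hab
      simp only [mem_filter, mem_range]
      have hmod : (ab.1 * p + ab.2) % p = ab.2 := by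
        rw [add_comm, Nat.add_mul_mod_self_right, Nat.mod_eq_of_lt hab.2.1]
      refine ⟨?_, by rw [hmod]; exact hab.2.2⟩
      calc ab.1 * p + ab.2 < ab.1 * p + p := by omega
        _ = (ab.1 + 1) * p := by ring
        _ ≤ d * p := Nat.mul_le_mul_right _ (by omega)
    · intro x hx
      exact Nat.div_add_mod' x p
    · intro ab hab
      simp only [mem_product, mem_range, mem_filter] at hab
      have h1 : (ab.1 * p + ab.2) / p = ab.1 := by
        rw [add_comm, Nat.add_mul_div_right _ _ hp, Nat.div_eq_of_lt hab.2.1, zero_add]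
      have h2 : (ab.1 * p + ab.2) % p = ab.2 := by
        rw [add_comm, Nat.add_mul_mod_self_right, Nat.mod_eq_of_lt hab.2.1]
      show ((ab.1 * p + ab.2) / p, (ab.1 * p + ab.2) % p) = ab
      rw [h1, h2]
  rw [key, Finset.card_product, Finset.card_range]

/-- Cardinality of ZMod filter equals range filter. -/
lemma card_zmod_filter (m : ℕ) [NeZero m] (S : ℕ → Prop) [DecidablePred S] :
    (Finset.univ.filter (fun x : ZMod m => S x.val)).card
      = ((Finset.range m).filter S).card := by
  apply Finset.card_bij (fun x _ => x.val)
  · intro x hx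
    simp only [mem_filter, mem_univ, true_and] at hx
    simp only [mem_filter, mem_range]
    exact ⟨ZMod.val_lt x, hx⟩
  · intro x _ y _ h
    exact ZMod.val_injective _ h
  · intro y hy
    simp only [mem_filter, mem_range] at hy
    refine ⟨(y : ZMod m), ?_, ?_⟩
    · simp only [mem_filter, mem_univ, true_and]
      rw [ZMod.val_natCast, Nat.mod_eq_of_lt hy.1]
      exact hy.2
    · rw [ZMod.val_natCast, Nat.mod_eq_of_lt hy.1]

lemma card_B (p e : ℕ) [NeZero (p ^ e)] (hp : p.Prime) (hodd : Odd p) (he : 0 < e) :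
    2 * (Finset.univ.filter
        (fun x : ZMod (p ^ e) => 0 < x.val % p ∧ 2 * (x.val % p) < p)).card
      = p ^ (e - 1) * (p - 1) := by
  have hsplit : p ^ e = p ^ (e - 1) * p := by
    rw [← pow_succ]; congr 1; omega
  have hstep := card_zmod_filter (p ^ e) (fun r => 0 < r % p ∧ 2 * (r % p) < p)
  rw [hstep, hsplit, count_mod_aux _ p hp.pos (fun r => 0 < r ∧ 2 * r < p)]
  obtain ⟨q, hq⟩ := hodd
  have hset : (Finset.range p).filter (fun r => 0 < r ∧ 2 * r < p)
      = Finset.Ico 1 (q + 1) := by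
    ext r
    simp only [mem_filter, mem_range, mem_Ico]
    omega
  rw [hset, Nat.card_Ico]
  have hq1 : p - 1 = 2 * q := by omega
  have hq2 : q + 1 - 1 = q := by omega
  rw [hq1, hq2]
  ring

theorem stmt4 (n : ℕ) (hn : Odd n) (h3 : 3 ≤ n) :
    ∃ P : Finset (Equiv.Perm (ZMod n)),
      n * n.totient / 2 ^ n.primeFactors.card ≤ P.card ∧
      ∀ σ ∈ P, ∀ τ ∈ P, σ ≠ τ → Function.Bijective (fun i => σ i + τ i) := by
  classical
  haveI : NeZero n := ⟨by omega⟩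
  set F := n.primeFactors with hF
  set C : ZMod n → Prop := fun x => ∀ p ∈ F, 0 < x.val % p ∧ 2 * (x.val % p) < p with hC
  set A : Finset (ZMod n) := Finset.univ.filter C with hA
  -- prime facts
  have hFfacts : ∀ p ∈ F, p.Prime ∧ p ∣ n ∧ Odd p := by
    intro p hp
    obtain ⟨h1, h2, _⟩ := Nat.mem_primeFactors.mp hp
    refine ⟨h1, h2, ?_⟩
    rcases h1.eq_two_or_odd' with h | h
    · exfalso; rw [h] at h2; exact (Nat.not_even_iff_odd.mpr hn) (even_iff_two_dvd.mpr h2)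
    · exact h
  -- unit criterion
  have hunit : ∀ v : ℕ, (∀ p ∈ F, v % p ≠ 0) → IsUnit ((v : ℕ) : ZMod n) := by
    intro v hv
    rw [ZMod.isUnit_iff_coprime]
    by_contra h
    obtain ⟨p, hp, h1, h2⟩ := Nat.Prime.not_coprime_iff_dvd.mp h
    have hpF : p ∈ F := Nat.mem_primeFactors.mpr ⟨hp, h2, NeZero.ne n⟩
    have : v % p = 0 := by obtain ⟨c, rfl⟩ := h1; simp [Nat.mul_mod_right]
    exact hv p hpF this
  have hAunit : ∀ x : ZMod n, C x → IsUnit x := by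
    intro x hx
    have := hunit x.val (fun p hp => (hx p hp).1.ne')
    rwa [ZMod.natCast_val, ZMod.cast_id] at this
  have hsum : ∀ x y : ZMod n, C x → C y → IsUnit (x + y) := by
    intro x y hx hy
    have hmod : ∀ p ∈ F, (x + y).val % p = x.val % p + y.val % p := by
      intro p hp
      obtain ⟨hprime, hdvd, _⟩ := hFfacts p hp
      have hlt : x.val % p + y.val % p < p := by
        have h1 := (hx p hp).2; have h2 := (hy p hp).2; omega
      rw [ZMod.val_add, Nat.mod_mod_of_dvd _ hdvd, Nat.add_mod,
        Nat.mod_eq_of_lt hlt]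
    have := hunit (x + y).val (fun p hp => by
      rw [hmod p hp]
      have h1 := (hx p hp).1
      omega)
    rwa [ZMod.natCast_val, ZMod.cast_id] at this
  -- the permutations
  let f : ZMod n × ZMod n → Equiv.Perm (ZMod n) := fun ab =>
    if h : IsUnit ab.1 then (Units.mulLeft h.unit).trans (Equiv.addRight ab.2) else 1
  have hfapp : ∀ a b : ZMod n, IsUnit a → ∀ i, f (a, b) i = a * i + b := by
    intro a b h i
    simp only [f, dif_pos h, Equiv.trans_apply, Units.mulLeft_apply,
      Equiv.coe_addRight, IsUnit.unit_spec]
  let P : Finset (Equiv.Perm (ZMod n)) := (A ×ˢ Finset.univ).image f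
  have hmemA : ∀ x : ZMod n, x ∈ A ↔ C x := by
    intro x; simp [hA]
  -- injectivity on A ×ˢ univ
  have hinj : Set.InjOn f ↑(A ×ˢ (Finset.univ : Finset (ZMod n))) := by
    rintro ⟨a, b⟩ hab ⟨c, d⟩ hcd hfe
    simp only [coe_product, Set.mem_prod, mem_coe] at hab hcd
    have ha : IsUnit a := hAunit a ((hmemA a).mp hab.1)
    have hc : IsUnit c := hAunit c ((hmemA c).mp hcd.1)
    have h0 : a * 0 + b = c * 0 + d := by
      rw [← hfapp a b ha 0, ← hfapp c d hc 0, hfe]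
    have h1 : a * 1 + b = c * 1 + d := by
      rw [← hfapp a b ha 1, ← hfapp c d hc 1, hfe]
    simp only [mul_zero, zero_add, mul_one] at h0 h1
    subst h0
    have : a = c := by
      have := h1
      exact add_right_cancel this
    simp [this]
  have hPcard : P.card = A.card * n := by
    rw [Finset.card_image_of_injOn hinj, Finset.card_product, Finset.card_univ,
      ZMod.card]
  -- ===== counting |A| =====
  have hAcount : 2 ^ F.card * A.card = n.totient := by
    set ι := {p // p ∈ F}
    set a : ι → ℕ := fun p => (p : ℕ) ^ n.factorization (p : ℕ) with ha
    have hfact_pos : ∀ i : ι, 0 < n.factorization (i : ℕ) :=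
      fun i => Nat.Prime.factorization_pos_of_dvd (hFfacts i i.2).1 (NeZero.ne n)
        (hFfacts i i.2).2.1
    have hai_pos : ∀ i : ι, 0 < a i := fun i => pow_pos (hFfacts i i.2).1.pos _
    haveI : ∀ i : ι, NeZero (a i) := fun i => ⟨(hai_pos i).ne'⟩
    have hcop2 : Pairwise (Function.onFun Nat.Coprime a) := by
      intro i j hij
      have hij' : (i : ℕ) ≠ (j : ℕ) := fun h => hij (Subtype.ext h)
      exact Nat.Coprime.pow _ _ ((Nat.coprime_primes (hFfacts i i.2).1
        (hFfacts j j.2).1).mpr hij')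
    have hprod : ∏ i : ι, a i = n := by
      have h1 := Nat.factorization_prod_pow_eq_self (NeZero.ne n)
      rw [Finsupp.prod, Nat.support_factorization] at h1
      rw [← h1, ← hF, Finset.prod_coe_sort F (fun p => p ^ n.factorization p)]
    let e : ZMod n ≃+* Π i : ι, ZMod (a i) :=
      (ZMod.ringEquivCongr hprod.symm).trans (ZMod.prodEquivPi a hcop2)
    have hdvd : ∀ i : ι, a i ∣ n := by
      intro i
      rw [← hprod]
      exact Finset.dvd_prod_of_mem a (Finset.mem_univ i)
    have hcomp : ∀ (x : ZMod n) (i : ι), (e x i).val % (i : ℕ) = x.val % (i : ℕ) := by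
      intro x i
      have huniq : (Pi.evalRingHom (fun i => ZMod (a i)) i).comp
          (e : ZMod n →+* Π i : ι, ZMod (a i))
          = ZMod.castHom (hdvd i) (ZMod (a i)) := RingHom.ext_zmod _ _
      have h1 : e x i = ZMod.castHom (hdvd i) (ZMod (a i)) x := by
        rw [← huniq]; rfl
      have h2 : (ZMod.castHom (hdvd i) (ZMod (a i)) x).val = x.val % a i := by
        rw [ZMod.castHom_apply, ← ZMod.natCast_val, ZMod.val_natCast]
      have hdp : (i : ℕ) ∣ a i := dvd_pow_self _ (hfact_pos i).ne'
      rw [h1, h2, Nat.mod_mod_of_dvd _ hdp]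
    let B : ∀ i : ι, Finset (ZMod (a i)) := fun i =>
      Finset.univ.filter (fun z => 0 < z.val % (i : ℕ) ∧ 2 * (z.val % (i : ℕ)) < (i : ℕ))
    have hcardA : A.card = (Fintype.piFinset B).card := by
      apply Finset.card_bij (fun x _ => e x)
      · intro x hx
        rw [Fintype.mem_piFinset]
        intro i
        simp only [B, mem_filter, mem_univ, true_and, hcomp x i]
        exact (hmemA x).mp hx i i.2
      · intro x _ y _ h
        exact e.injective h
      · intro y hy
        refine ⟨e.symm y, ?_, by simp⟩
        rw [hmemA]
        intro p hp
        have := Fintype.mem_piFinset.mp hy ⟨p, hp⟩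
        simp only [B, mem_filter, mem_univ, true_and] at this
        rw [← hcomp (e.symm y) ⟨p, hp⟩, e.apply_symm_apply]
        exact this
    have hcardPi : (Fintype.piFinset B).card = ∏ i : ι, (B i).card :=
      Fintype.card_piFinset B
    have htot : n.totient = ∏ i : ι, (i : ℕ) ^ (n.factorization (i : ℕ) - 1)
        * ((i : ℕ) - 1) := by
      rw [Nat.totient_eq_prod_factorization (NeZero.ne n)]
      rw [Finsupp.prod, Nat.support_factorization, ← hF,
        ← Finset.prod_coe_sort F (fun p => p ^ (n.factorization p - 1) * (p - 1))]
    rw [hcardA, hcardPi, htot]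
    have hk : (2 : ℕ) ^ F.card = ∏ _i : ι, 2 := by
      rw [Finset.prod_const, Finset.card_univ, Fintype.card_coe]
    rw [hk, ← Finset.prod_mul_distrib]
    apply Finset.prod_congr rfl
    intro i _
    have := card_B (i : ℕ) (n.factorization (i : ℕ)) (hFfacts i i.2).1
      (hFfacts i i.2).2.2 (hfact_pos i)
    calc 2 * (B i).card = (i:ℕ) ^ (n.factorization (i:ℕ) - 1) * ((i:ℕ) - 1) := this
      _ = _ := by rfl
  -- ===== conclusion =====
  refine ⟨P, ?_, ?_⟩
  · rw [hPcard]
    have h1 : n * n.totient = 2 ^ F.card * (A.card * n) := by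
      rw [← hAcount]; ring
    rw [h1, Nat.mul_div_cancel_left _ (pow_pos two_pos _)]
  · intro σ hσ τ hτ _
    obtain ⟨⟨a1, b1⟩, hab1, rfl⟩ := Finset.mem_image.mp hσ
    obtain ⟨⟨a2, b2⟩, hab2, rfl⟩ := Finset.mem_image.mp hτ
    rw [Finset.mem_product] at hab1 hab2
    have ha1 : C a1 := (hmemA a1).mp hab1.1
    have ha2 : C a2 := (hmemA a2).mp hab2.1
    have hu1 : IsUnit a1 := hAunit _ ha1
    have hu2 : IsUnit a2 := hAunit _ ha2
    have hu : IsUnit (a1 + a2) := hsum _ _ ha1 ha2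
    have heq : (fun i => f (a1, b1) i + f (a2, b2) i)
        = ⇑((Units.mulLeft hu.unit).trans (Equiv.addRight (b1 + b2))) := by
      funext i
      simp only [Equiv.trans_apply, Units.mulLeft_apply, Equiv.coe_addRight,
        IsUnit.unit_spec, hfapp a1 b1 hu1 i, hfapp a2 b2 hu2 i]
      ring
    rw [heq]
    exact Equiv.bijective _
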